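/- With σ(N,a,b) = Σ_{m∈ℤ} e^{2πim(ηN − 1.5(a+b))} sin³(πm(b−a))/(π³m³) (m=0 term equal to (b−a)³), there exist a quadratic irrational η, reals 0 < a < b < 1, and infinitely many N for which σ(N,a,b) ≠ (b−a)³; consequently the naive density prediction J_{3,1}(N) ∼ (b−a)³ I_{3,1}(N) fails for primes restricted by a < {ηp} < b. -/

import Mathlib

def IsQuadraticIrrational (η : ℝ) : Prop :=
  Irrational η ∧ ∃ A B C : ℤ, A ≠ 0 ∧ (A : ℝ) * η ^ 2 + B * η + C = 0

noncomputable def sigmaTerm (η a b : ℝ) (N : ℕ) (m : ℤ) : ℂ :=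
  if m = 0 then ((b - a) ^ 3 : ℝ)
  else Complex.exp (2 * Real.pi * Complex.I * m * (η * N - 1.5 * (a + b)))
        * (Real.sin (Real.pi * m * (b - a)) ^ 3 / (Real.pi ^ 3 * (m : ℝ) ^ 3))

noncomputable def sigmaSeries (η a b : ℝ) (N : ℕ) : ℂ := ∑' m : ℤ, sigmaTerm η a b N m

open Real

namespace NaiveDensityAux

/-! ### Elementary bounds -/

lemma one_sub_cos_abs_le (u : ℝ) : |1 - Real.cos u| ≤ |u| := by
  have h := Real.cos_sub_cos 0 u
  simp only [Real.cos_zero, zero_add, zero_sub, neg_div, Real.sin_neg] at h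
  have h2 : 1 - Real.cos u = 2 * Real.sin (u/2) ^ 2 := by nlinarith [h]
  have h3 : |Real.sin (u/2)| ≤ |u/2| := Real.abs_sin_le_abs
  have h4 : |Real.sin (u/2)| ≤ 1 := abs_le.mpr ⟨Real.neg_one_le_sin _, Real.sin_le_one _⟩
  have h5 : Real.sin (u/2) ^ 2 ≤ |u/2| := by
    rw [← sq_abs]
    calc |Real.sin (u/2)|^2 ≤ |u/2| * 1 := by
            rw [sq]; exact mul_le_mul h3 h4 (abs_nonneg _) (abs_nonneg _)
      _ = |u/2| := mul_one _
  rw [h2, abs_of_nonneg (by positivity)]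
  rw [abs_div] at h5
  simp only [abs_two] at h5
  linarith [abs_nonneg u]

/-! ### The series terms -/

noncomputable def vv (X : ℝ) (k : ℕ) : ℝ :=
  -(Real.cos (2*π*(2*(k:ℝ)+1)*X) * (-1:ℝ)^k / (π^3*(2*(k:ℝ)+1)^3))

noncomputable def ww (k : ℕ) : ℝ := (-1:ℝ)^k / (π^3*(2*(k:ℝ)+1)^3)

lemma base_hasSum : HasSum (fun k : ℕ => 1/((k:ℝ)+1)^2) (π^2/6) := by
  have key : HasSum (fun n : ℕ => (1:ℝ)/((n+1:ℕ):ℝ)^2) (π^2/6) :=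
    (hasSum_nat_add_iff (f := fun n : ℕ => (1:ℝ)/(n:ℝ)^2) 1).mpr
      (by simpa using hasSum_zeta_two)
  simpa [Nat.cast_add, Nat.cast_one] using key

lemma base_summable : Summable (fun k : ℕ => 1/((k:ℝ)+1)^2) := base_hasSum.summable

lemma denom_ge (k : ℕ) : ((k:ℝ)+1)^2 ≤ π^3*(2*(k:ℝ)+1)^3 := by
  have hpi : (3:ℝ) < π := Real.pi_gt_three
  have hk : (0:ℝ) ≤ (k:ℝ) := Nat.cast_nonneg k
  have h1 : ((k:ℝ)+1)^2 ≤ (2*(k:ℝ)+1)^3 := by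
    nlinarith [mul_nonneg hk hk, mul_nonneg (mul_nonneg hk hk) hk]
  have hp3 : (1:ℝ) ≤ π^3 := one_le_pow₀ (by linarith)
  calc ((k:ℝ)+1)^2 ≤ (2*(k:ℝ)+1)^3 := h1
    _ ≤ π^3*(2*(k:ℝ)+1)^3 := le_mul_of_one_le_left (by positivity) hp3

lemma abs_vv_le (X : ℝ) (k : ℕ) : |vv X k| ≤ 1/((k:ℝ)+1)^2 := by
  have hd := denom_ge k
  have hpos : (0:ℝ) < π^3*(2*(k:ℝ)+1)^3 := by positivity
  rw [vv, abs_neg, abs_div, abs_mul, abs_pow, abs_neg, abs_one, one_pow, mul_one,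
    abs_of_pos hpos]
  have hcos : |Real.cos (2*π*(2*(k:ℝ)+1)*X)| ≤ 1 :=
    abs_le.mpr ⟨Real.neg_one_le_cos _, Real.cos_le_one _⟩
  rw [div_le_div_iff₀ hpos (by positivity)]
  nlinarith [abs_nonneg (Real.cos (2*π*(2*(k:ℝ)+1)*X)), sq_nonneg ((k:ℝ)+1)]

lemma abs_ww_le (k : ℕ) : |ww k| ≤ 1/((k:ℝ)+1)^2 := by
  have hd := denom_ge k
  have hpos : (0:ℝ) < π^3*(2*(k:ℝ)+1)^3 := by positivity
  rw [ww, abs_div, abs_pow, abs_neg, abs_one, one_pow, abs_of_pos hpos]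
  rw [div_le_div_iff₀ hpos (by positivity)]
  nlinarith [sq_nonneg ((k:ℝ)+1)]

lemma vv_summable (X : ℝ) : Summable (vv X) :=
  Summable.of_abs (base_summable.of_nonneg_of_le (fun _ => abs_nonneg _) (abs_vv_le X))

lemma ww_summable : Summable ww :=
  Summable.of_abs (base_summable.of_nonneg_of_le (fun _ => abs_nonneg _) abs_ww_le)

lemma diff_bound (X : ℝ) (k : ℕ) :
    |vv X k + ww k| ≤ (2*|X|/9) * (1/((k:ℝ)+1)^2) := by
  have hpi : (3:ℝ) < π := Real.pi_gt_three
  have hpos : (0:ℝ) < π^3*(2*(k:ℝ)+1)^3 := by positivity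
  have h1 : vv X k + ww k
      = (1 - Real.cos (2*π*(2*(k:ℝ)+1)*X)) * (-1:ℝ)^k / (π^3*(2*(k:ℝ)+1)^3) := by
    rw [vv, ww]; ring
  rw [h1, abs_div, abs_mul, abs_pow, abs_neg, abs_one, one_pow, mul_one, abs_of_pos hpos]
  have h2 : |1 - Real.cos (2*π*(2*(k:ℝ)+1)*X)| ≤ 2*π*(2*(k:ℝ)+1)*|X| := by
    have := one_sub_cos_abs_le (2*π*(2*(k:ℝ)+1)*X)
    calc |1 - Real.cos (2*π*(2*(k:ℝ)+1)*X)| ≤ |2*π*(2*(k:ℝ)+1)*X| := this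
      _ = 2*π*(2*(k:ℝ)+1)*|X| := by
          rw [abs_mul, abs_of_pos (by positivity : (0:ℝ) < 2*π*(2*(k:ℝ)+1))]
  have hk : (0:ℝ) ≤ (k:ℝ) := Nat.cast_nonneg k
  rw [show (2*|X|/9) * (1/((k:ℝ)+1)^2) = (2*|X|)/(9*((k:ℝ)+1)^2) by
    field_simp]
  rw [div_le_div_iff₀ hpos (by positivity)]
  have hpisq : (9:ℝ) ≤ π^2 := by nlinarith
  have hsq : ((k:ℝ)+1)^2 ≤ (2*(k:ℝ)+1)^2 := by nlinarith [mul_nonneg hk hk]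
  have h5 : 9*((k:ℝ)+1)^2 ≤ π^2*(2*(k:ℝ)+1)^2 := by
    nlinarith [hpisq, hsq, sq_nonneg (2*(k:ℝ)+1), sq_nonneg ((k:ℝ)+1)]
  calc |1 - Real.cos (2*π*(2*(k:ℝ)+1)*X)| * (9*((k:ℝ)+1)^2)
      ≤ (2*π*(2*(k:ℝ)+1)*|X|) * (9*((k:ℝ)+1)^2) :=
        mul_le_mul_of_nonneg_right h2 (by positivity)
    _ ≤ (2*π*(2*(k:ℝ)+1)*|X|) * (π^2*(2*(k:ℝ)+1)^2) :=
        mul_le_mul_of_nonneg_left h5 (by positivity)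
    _ = (2*|X|) * (π^3*(2*(k:ℝ)+1)^3) := by ring

/-! ### Lower bound for the alternating series -/

noncomputable def ee (j : ℕ) : ℝ := 1 / (π^3*(4*(j:ℝ)+1)^3)
noncomputable def oo (j : ℕ) : ℝ := 1 / (π^3*(4*(j:ℝ)+3)^3)

lemma ee_summable : Summable ee := by
  apply base_summable.of_nonneg_of_le (fun j => by simp only [ee]; positivity)
  intro j
  simp only [ee]
  have hj : (0:ℝ) ≤ (j:ℝ) := Nat.cast_nonneg j
  have hpi : (3:ℝ) < π := Real.pi_gt_three
  apply one_div_le_one_div_of_le (by positivity)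
  have h1 : ((j:ℝ)+1)^2 ≤ (4*(j:ℝ)+1)^3 := by
    nlinarith [mul_nonneg hj hj, mul_nonneg (mul_nonneg hj hj) hj]
  have hp3 : (1:ℝ) ≤ π^3 := one_le_pow₀ (by linarith)
  calc ((j:ℝ)+1)^2 ≤ (4*(j:ℝ)+1)^3 := h1
    _ ≤ π^3*(4*(j:ℝ)+1)^3 := le_mul_of_one_le_left (by positivity) hp3

lemma oo_summable : Summable oo := by
  apply base_summable.of_nonneg_of_le (fun j => by simp only [oo]; positivity)
  intro j
  simp only [oo]
  have hj : (0:ℝ) ≤ (j:ℝ) := Nat.cast_nonneg j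
  have hpi : (3:ℝ) < π := Real.pi_gt_three
  apply one_div_le_one_div_of_le (by positivity)
  have h1 : ((j:ℝ)+1)^2 ≤ (4*(j:ℝ)+3)^3 := by
    nlinarith [mul_nonneg hj hj, mul_nonneg (mul_nonneg hj hj) hj]
  have hp3 : (1:ℝ) ≤ π^3 := one_le_pow₀ (by linarith)
  calc ((j:ℝ)+1)^2 ≤ (4*(j:ℝ)+3)^3 := h1
    _ ≤ π^3*(4*(j:ℝ)+3)^3 := le_mul_of_one_le_left (by positivity) hp3

lemma ww_even (j : ℕ) : ww (2*j) = ee j := by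
  rw [ww, ee]
  have h1 : ((-1:ℝ))^(2*j) = 1 := by rw [pow_mul]; norm_num
  rw [h1]
  push_cast
  ring_nf

lemma ww_odd (j : ℕ) : ww (2*j+1) = -oo j := by
  rw [ww, oo]
  have h1 : ((-1:ℝ))^(2*j+1) = -1 := by rw [pow_succ, pow_mul]; norm_num
  rw [h1]
  push_cast
  ring_nf

lemma ell_lower : 26/(27*π^3) ≤ ∑' k, ww k := by
  have he : Summable (fun j => ww (2*j)) := ee_summable.congr (fun j => (ww_even j).symm)
  have ho : Summable (fun j => ww (2*j+1)) := (oo_summable.neg).congr (fun j => (ww_odd j).symm)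
  have hsplit := tsum_even_add_odd he ho
  have heq : ∑' k, ww k = ∑' j, (ee j - oo j) := by
    rw [← hsplit]
    rw [tsum_congr ww_even, tsum_congr ww_odd, tsum_neg, ← sub_eq_add_neg,
      ← Summable.tsum_sub ee_summable oo_summable]
  rw [heq]
  have hsum : Summable (fun j => ee j - oo j) := ee_summable.sub oo_summable
  have h0 : ee 0 - oo 0 = 26/(27*π^3) := by
    simp only [ee, oo]
    have hpi := Real.pi_pos
    norm_num
    field_simp
    ring
  rw [← h0]
  apply Summable.le_tsum hsum 0
  intro j _
  have hj : (0:ℝ) ≤ (j:ℝ) := Nat.cast_nonneg j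
  have h1 : (4*(j:ℝ)+1)^3 ≤ (4*(j:ℝ)+3)^3 := by
    nlinarith [mul_nonneg hj hj, mul_nonneg (mul_nonneg hj hj) hj]
  simp only [ee, oo, sub_nonneg]
  apply one_div_le_one_div_of_le (by positivity)
  exact mul_le_mul_of_nonneg_left h1 (by positivity)

lemma T_neg (X : ℝ) (hX : |X| ≤ 1/20) : ∑' k, vv X k < 0 := by
  have hpi : (3:ℝ) < π := Real.pi_gt_three
  have hb_sum : Summable (fun k : ℕ => (2*|X|/9) * (1/((k:ℝ)+1)^2)) :=
    base_summable.mul_left _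
  have habs : Summable (fun k => |vv X k + ww k|) :=
    hb_sum.of_nonneg_of_le (fun _ => abs_nonneg _) (diff_bound X)
  have hvw : Summable (fun k => vv X k + ww k) := (vv_summable X).add ww_summable
  have h1 : |∑' k, (vv X k + ww k)| ≤ ∑' k, |vv X k + ww k| := by
    have := norm_tsum_le_tsum_norm (f := fun k => vv X k + ww k)
      (by simpa [Real.norm_eq_abs] using habs)
    simpa [Real.norm_eq_abs] using this
  have h2 : ∑' k, |vv X k + ww k| ≤ ∑' k : ℕ, (2*|X|/9) * (1/((k:ℝ)+1)^2) :=
    Summable.tsum_le_tsum (diff_bound X) habs hb_sum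
  have h3 : ∑' k : ℕ, (2*|X|/9) * (1/((k:ℝ)+1)^2) = (2*|X|/9) * (π^2/6) := by
    rw [tsum_mul_left, base_hasSum.tsum_eq]
  have h4 : ∑' k, (vv X k + ww k) = (∑' k, vv X k) + ∑' k, ww k :=
    Summable.tsum_add (vv_summable X) ww_summable
  have hnum : (2*|X|/9) * (π^2/6) < 26/(27*π^3) := by
    rw [lt_div_iff₀ (by positivity)]
    have heq : (2*|X|/9) * (π^2/6) * (27*π^3) = |X| * π^5 := by ring
    rw [heq]
    have h5 : π^5 < 3.15^5 := by
      apply pow_lt_pow_left₀ Real.pi_lt_d2 (le_of_lt Real.pi_pos)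
      norm_num
    have h6 : (3.15:ℝ)^5 < 320 := by norm_num
    calc |X| * π^5 ≤ (1/20) * π^5 := mul_le_mul_of_nonneg_right hX (by positivity)
      _ < (1/20) * 320 := by
          apply mul_lt_mul_of_pos_left _ (by norm_num)
          linarith
      _ ≤ 26 := by norm_num
  have hl := ell_lower
  have hrw : ∑' k, vv X k = (∑' k, (vv X k + ww k)) - ∑' k, ww k := by rw [h4]; ring
  rw [hrw]
  have h7 : ∑' k, (vv X k + ww k) ≤ (2*|X|/9) * (π^2/6) := by
    calc ∑' k, (vv X k + ww k) ≤ |∑' k, (vv X k + ww k)| := le_abs_self _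
      _ ≤ ∑' k, |vv X k + ww k| := h1
      _ ≤ _ := h2.trans_eq h3
  linarith

/-! ### The sigma terms for η = √2, a = 1/4, b = 3/4 -/

lemma sigmaTerm_ne (N : ℕ) (m : ℤ) (hm : m ≠ 0) :
    sigmaTerm (Real.sqrt 2) (1/4) (3/4) N m
      = Complex.exp (((2*π*m*(Real.sqrt 2*N - 3/2) : ℝ)) * Complex.I)
        * ((Real.sin (π*m*(1/2)) ^ 3 / (π^3*(m:ℝ)^3) : ℝ)) := by
  rw [sigmaTerm, if_neg hm]
  congr 2
  · push_cast
    ring_nf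
  · norm_num

lemma sigmaTerm_zero (N : ℕ) :
    sigmaTerm (Real.sqrt 2) (1/4) (3/4) N 0 = ((1/8 : ℝ) : ℂ) := by
  rw [sigmaTerm, if_pos rfl]; norm_num

lemma sigmaTerm_re (N : ℕ) (m : ℤ) (hm : m ≠ 0) :
    (sigmaTerm (Real.sqrt 2) (1/4) (3/4) N m).re
      = Real.cos (2*π*m*(Real.sqrt 2*N - 3/2)) * (Real.sin (π*m*(1/2)) ^ 3 / (π^3*(m:ℝ)^3)) := by
  rw [sigmaTerm_ne N m hm]
  simp only [Complex.mul_re, Complex.ofReal_re, Complex.ofReal_im, mul_zero, sub_zero,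
    Complex.exp_ofReal_mul_I_re]

lemma sigmaTerm_norm (N : ℕ) (m : ℤ) :
    ‖sigmaTerm (Real.sqrt 2) (1/4) (3/4) N m‖
      ≤ (if m = 0 then (1/8:ℝ) else 0) + 1/(m:ℝ)^2 := by
  rcases eq_or_ne m 0 with rfl | hm
  · rw [sigmaTerm_zero]; norm_num
  · rw [sigmaTerm_ne N m hm, if_neg hm]
    have hA : (1:ℝ) ≤ |(m:ℝ)| := by
      rw [← Int.cast_abs]; exact_mod_cast Int.one_le_abs hm
    have hpi : (3:ℝ) < π := Real.pi_gt_three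
    have hsin : |Real.sin (π*m*(1/2)) ^ 3| ≤ 1 := by
      rw [abs_pow]
      exact pow_le_one₀ (abs_nonneg _) (abs_le.mpr ⟨Real.neg_one_le_sin _, Real.sin_le_one _⟩)
    rw [norm_mul, Complex.norm_exp_ofReal_mul_I, one_mul,
      Complex.norm_real, Real.norm_eq_abs, zero_add, abs_div]
    rw [div_le_div_iff₀ (by positivity) (by positivity)]
    have habs : |π^3*(m:ℝ)^3| = π^3 * |(m:ℝ)|^3 := by
      rw [abs_mul, abs_pow, abs_pow, abs_of_pos Real.pi_pos]
    rw [habs]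
    have hm2 : (m:ℝ)^2 = |(m:ℝ)|^2 := (sq_abs _).symm
    rw [hm2]
    have h1 : |(m:ℝ)|^2 ≤ |(m:ℝ)|^3 := pow_le_pow_right₀ hA (by norm_num)
    have h2 : (1:ℝ) ≤ π^3 := one_le_pow₀ (by linarith)
    calc |Real.sin (π*m*(1/2)) ^ 3| * |(m:ℝ)|^2 ≤ 1 * |(m:ℝ)|^2 :=
          mul_le_mul_of_nonneg_right hsin (by positivity)
      _ = |(m:ℝ)|^2 := one_mul _
      _ ≤ |(m:ℝ)|^3 := h1
      _ ≤ π^3 * |(m:ℝ)|^3 := le_mul_of_one_le_left (by positivity) h2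
      _ = 1 * (π^3 * |(m:ℝ)|^3) := (one_mul _).symm

lemma sigmaTerm_summable (N : ℕ) :
    Summable (fun m : ℤ => sigmaTerm (Real.sqrt 2) (1/4) (3/4) N m) := by
  refine Summable.of_norm_bounded ?_ (sigmaTerm_norm N)
  exact ((hasSum_ite_eq (0:ℤ) (1/8:ℝ)).summable).add (summable_one_div_int_pow.2 one_lt_two)

/-! ### The real parts as a function on ℤ -/

noncomputable def ff (N : ℕ) (m : ℤ) : ℝ := (sigmaTerm (Real.sqrt 2) (1/4) (3/4) N m).re

lemma ff_neg (N : ℕ) (m : ℤ) (hm : m ≠ 0) : ff N (-m) = ff N m := by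
  have hm' : -m ≠ 0 := neg_ne_zero.mpr hm
  rw [ff, ff, sigmaTerm_re N _ hm', sigmaTerm_re N _ hm]
  push_cast
  rw [show 2*π*(-(m:ℝ))*(Real.sqrt 2*N - 3/2) = -(2*π*(m:ℝ)*(Real.sqrt 2*N - 3/2)) by ring,
    show π*(-(m:ℝ))*(1/2) = -(π*(m:ℝ)*(1/2)) by ring, Real.cos_neg, Real.sin_neg]
  ring

lemma ff_odd (N : ℕ) (n : ℤ) (k : ℕ) :
    ff N ((2*k+1 : ℕ) : ℤ) = vv (Real.sqrt 2*N - n) k := by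
  have hm : ((2*k+1 : ℕ) : ℤ) ≠ 0 := by positivity
  rw [ff, sigmaTerm_re N _ hm]
  have hsin : Real.sin (π*(((2*k+1 : ℕ):ℤ):ℝ)*(1/2)) = (-1:ℝ)^k := by
    rw [show π*(((2*k+1 : ℕ):ℤ):ℝ)*(1/2) = (k:ℝ)*π + π/2 by push_cast; ring,
      Real.sin_add_pi_div_two]
    have := Real.cos_nat_mul_pi_sub 0 k
    simpa using this
  have hcos : Real.cos (2*π*(((2*k+1 : ℕ):ℤ):ℝ)*(Real.sqrt 2*N - 3/2))
      = -Real.cos (2*π*(2*(k:ℝ)+1)*(Real.sqrt 2*N - n)) := by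
    rw [show 2*π*(((2*k+1 : ℕ):ℤ):ℝ)*(Real.sqrt 2*N - 3/2)
        = (2*π*(2*(k:ℝ)+1)*(Real.sqrt 2*N - n) - π)
          + (((2*(k:ℤ)+1)*n - 3*(k:ℤ) - 1 : ℤ):ℝ)*(2*π) by push_cast; ring,
      Real.cos_add_int_mul_two_pi, Real.cos_sub_pi]
  rw [hsin, hcos, vv]
  have hcube : ((-1:ℝ)^k)^3 = (-1:ℝ)^k := by
    rcases Nat.even_or_odd k with h | h
    · simp [h.neg_one_pow]
    · simp [h.neg_one_pow]
      norm_num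
  rw [hcube]
  have hden : ((((2*k+1 : ℕ):ℤ)):ℝ)^3 = (2*(k:ℝ)+1)^3 := by push_cast; ring
  rw [hden]
  ring

lemma ff_even (N : ℕ) (k : ℕ) : ff N ((2*k+2 : ℕ) : ℤ) = 0 := by
  have hm : ((2*k+2 : ℕ) : ℤ) ≠ 0 := by positivity
  rw [ff, sigmaTerm_re N _ hm]
  have hsin : Real.sin (π*(((2*k+2 : ℕ):ℤ):ℝ)*(1/2)) = 0 := by
    rw [show π*(((2*k+2 : ℕ):ℤ):ℝ)*(1/2) = ((k+1 : ℕ):ℝ)*π by push_cast; ring]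
    exact Real.sin_nat_mul_pi (k+1)
  rw [hsin]
  simp

lemma ff_zero (N : ℕ) : ff N 0 = 1/8 := by
  rw [ff, sigmaTerm_zero]
  simp

/-! ### Main per-N lemma -/

lemma main_lemma (N : ℕ) (n : ℤ) (h : |Real.sqrt 2 * N - n| ≤ 1/20) :
    sigmaSeries (Real.sqrt 2) (1/4) (3/4) N ≠ ((((3/4 : ℝ) - (1/4 : ℝ)) ^ 3 : ℝ) : ℂ) := by
  set X := Real.sqrt 2 * N - n with hX
  set T := ∑' k, vv X k with hT
  have hTneg : T < 0 := T_neg X h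
  have hvs : HasSum (vv X) T := (vv_summable X).hasSum
  have heven : HasSum (fun k : ℕ => ff N ((2*k : ℕ) + 1 : ℤ)) T := by
    have hfun : (fun k : ℕ => ff N ((2*k : ℕ) + 1 : ℤ)) = vv X := by
      funext k
      rw [show ((2*k : ℕ) : ℤ) + 1 = ((2*k+1 : ℕ) : ℤ) by push_cast; ring]
      exact ff_odd N n k
    rw [hfun]
    exact hvs
  have hodd : HasSum (fun k : ℕ => ff N ((2*k+1 : ℕ) + 1 : ℤ)) 0 := by
    have hfun : (fun k : ℕ => ff N ((2*k+1 : ℕ) + 1 : ℤ)) = (fun _ : ℕ => (0:ℝ)) := by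
      funext k
      rw [show ((2*k+1 : ℕ) : ℤ) + 1 = ((2*k+2 : ℕ) : ℤ) by push_cast; ring]
      exact ff_even N k
    rw [hfun]
    exact hasSum_zero
  have hpos : HasSum (fun j : ℕ => ff N ((j:ℤ) + 1)) T := by
    have he : HasSum (fun k : ℕ => ff N (((2*k : ℕ) : ℤ) + 1)) T :=
      heven.congr_fun (fun k => by norm_cast)
    have ho : HasSum (fun k : ℕ => ff N (((2*k+1 : ℕ) : ℤ) + 1)) 0 :=
      hodd.congr_fun (fun k => by norm_cast)
    have := HasSum.even_add_odd (f := fun j : ℕ => ff N ((j:ℤ) + 1)) (m := T) (m' := 0) he ho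
    rwa [add_zero] at this
  have hneg : HasSum (fun j : ℕ => ff N (-((j:ℤ) + 1))) T := by
    have hfun : (fun j : ℕ => ff N (-((j:ℤ) + 1))) = (fun j : ℕ => ff N ((j:ℤ) + 1)) := by
      funext j
      exact ff_neg N ((j:ℤ)+1) (by positivity)
    rw [hfun]
    exact hpos
  have htotal : HasSum (ff N) (T + ff N 0 + T) :=
    HasSum.of_add_one_of_neg_add_one hpos hneg
  intro hcontra
  have hre : (sigmaSeries (Real.sqrt 2) (1/4) (3/4) N).re = T + 1/8 + T := by
    rw [sigmaSeries, Complex.re_tsum (sigmaTerm_summable N)]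
    have := htotal.tsum_eq
    rw [ff_zero] at this
    exact this
  rw [hcontra] at hre
  rw [Complex.ofReal_re] at hre
  have : ((3/4 : ℝ) - (1/4 : ℝ)) ^ 3 = 1/8 := by norm_num
  rw [this] at hre
  linarith

lemma S_mem (M : ℕ) (hM : 0 < M) :
    ∃ N : ℕ, M ≤ N ∧ ∃ n : ℤ, |Real.sqrt 2 * N - n| ≤ 1/20 := by
  obtain ⟨k, hk0, hkle, hbd⟩ :=
    Real.exists_nat_abs_mul_sub_round_le (Real.sqrt 2) (n := 20*M) (by positivity)
  refine ⟨M*k, Nat.le_mul_of_pos_right M hk0, M * round ((k:ℝ) * Real.sqrt 2), ?_⟩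
  have h1 : Real.sqrt 2 * ((M*k : ℕ) : ℝ) - ((M * round ((k:ℝ) * Real.sqrt 2) : ℤ) : ℝ)
      = (M:ℝ) * ((k:ℝ) * Real.sqrt 2 - round ((k:ℝ) * Real.sqrt 2)) := by
    push_cast
    ring
  rw [h1, abs_mul, abs_of_nonneg (by positivity : (0:ℝ) ≤ (M:ℝ))]
  have hM1 : (1:ℝ) ≤ (M:ℝ) := by exact_mod_cast hM
  calc (M:ℝ) * |(k:ℝ) * Real.sqrt 2 - round ((k:ℝ) * Real.sqrt 2)|
      ≤ (M:ℝ) * (1/((20*M : ℕ) + 1)) := by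
        apply mul_le_mul_of_nonneg_left _ (by positivity)
        exact hbd
    _ ≤ 1/20 := by
        rw [mul_one_div, div_le_div_iff₀ (by positivity) (by norm_num)]
        push_cast
        linarith
    
lemma S_infinite : {N : ℕ | ∃ n : ℤ, |Real.sqrt 2 * N - n| ≤ 1/20}.Infinite := by
  rw [Set.infinite_coe_iff.symm]
  by_contra hfin
  rw [not_infinite_iff_finite] at hfin
  have hfin' : {N : ℕ | ∃ n : ℤ, |Real.sqrt 2 * N - n| ≤ 1/20}.Finite :=
    Set.toFinite _
  obtain ⟨M₀, hM₀⟩ := hfin'.bddAbove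
  obtain ⟨N, hNge, n, hn⟩ := S_mem (M₀ + 1) (Nat.succ_pos _)
  have : N ≤ M₀ := hM₀ ⟨n, hn⟩
  omega

end NaiveDensityAux

theorem naive_density_prediction_fails :
    ∃ η : ℝ, IsQuadraticIrrational η ∧ ∃ a b : ℝ, 0 < a ∧ a < b ∧ b < 1 ∧
      {N : ℕ | sigmaSeries η a b N ≠ (((b - a) ^ 3 : ℝ) : ℂ)}.Infinite := by
  refine ⟨Real.sqrt 2, ⟨irrational_sqrt_two, 1, 0, -2, one_ne_zero, ?_⟩,
    1/4, 3/4, by norm_num, by norm_num, by norm_num, ?_⟩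
  · rw [Real.sq_sqrt (by norm_num : (0:ℝ) ≤ 2)]
    push_cast
    ring
  · apply Set.Infinite.mono ?_ NaiveDensityAux.S_infinite
    intro N hN
    obtain ⟨n, hn⟩ := hN
    exact NaiveDensityAux.main_lemma N n hn
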